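/- In the shallow ANN setting with $\sigma$ discriminatory for $\mu$, let $\width \in \mathbb{N}$ and suppose there exists a global minimizer $\theta \in \mathbb{R}^{\mathfrak{d}_{\width-1}}$ of $\mathcal{L}_{\width-1}$ with $\mathcal{L}_{\width-1}(\theta) = \mathbf{m}_{\width-1} > 0$. Then there exists $\varepsilon > 0$ such that every $\vartheta \in \mathbb{R}^{\mathfrak{d}_\width}$ with $\mathcal{L}_\width(\vartheta) < \mathbf{m}_\width + \varepsilon$ has no inactive neurons, i.e., $\mathcal{I}_\width^\vartheta = \emptyset$. -/
import Mathlib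


open MeasureTheory Filter Topology

noncomputable section

def cube (d : ℕ) (a b : ℝ) : Set (Fin d → ℝ) :=
  Set.Icc (fun _ => a) (fun _ => b)

lemma widx {d H : ℕ} (i : Fin H) (j : Fin d) : i.1 * d + j.1 < d * H + 2 * H + 1 := by
  have hj := j.2
  have h1 : i.1 * d + j.1 < (i.1 + 1) * d := by rw [Nat.succ_mul]; omega
  have h2 : (i.1 + 1) * d ≤ H * d := Nat.mul_le_mul_right d i.2
  have h3 : H * d = d * H := Nat.mul_comm H d
  omega

/-- Realization function of a shallow ANN with `H` hidden neurons. -/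
def srel (d H : ℕ) (σ : ℝ → ℝ) (θ : Fin (d * H + 2 * H + 1) → ℝ) (x : Fin d → ℝ) : ℝ :=
  θ ⟨d * H + 2 * H, by omega⟩ +
    ∑ i : Fin H, θ ⟨d * H + H + i.1, by have := i.2; omega⟩ *
      σ (θ ⟨d * H + i.1, by have := i.2; omega⟩ +
        ∑ j : Fin d, θ ⟨i.1 * d + j.1, widx i j⟩ * x j)

/-- The risk (squared `L²` error against the target `f` over `[a,b]^d`). -/
def srisk (d H : ℕ) (a b : ℝ) (σ : ℝ → ℝ) (μ : Measure (Fin d → ℝ))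
    (f : (Fin d → ℝ) → ℝ) (θ : Fin (d * H + 2 * H + 1) → ℝ) : ℝ :=
  ∫ x in cube d a b, (srel d H σ θ x - f x) ^ 2 ∂μ


/-- Infimum of the risk over all parameter vectors of width `H`. -/
def sinf (d H : ℕ) (a b : ℝ) (σ : ℝ → ℝ) (μ : Measure (Fin d → ℝ))
    (f : (Fin d → ℝ) → ℝ) : ℝ :=
  ⨅ θ : Fin (d * H + 2 * H + 1) → ℝ, srisk d H a b σ μ f θ

/-- `σ` is discriminatory for the measure `μ` on `K` (Cybenko). -/
def Discriminatory (d : ℕ) (K : Set (Fin d → ℝ)) (μ : Measure (Fin d → ℝ))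
    (σ : ℝ → ℝ) : Prop :=
  ∀ φ : (Fin d → ℝ) → ℝ, Measurable φ →
    Integrable φ (μ.restrict K) →
    (∀ (w : Fin d → ℝ) (c : ℝ), ∫ x in K, σ ((∑ j, w j * x j) + c) * φ x ∂μ = 0) →
    ∫ x in K, |φ x| ∂μ = 0

end

/-- The set of inactive neurons of a width-`H` shallow ANN parameter vector: neurons
whose activation output vanishes for every input in the cube `[a,b]^d`. -/
def inactive (d H : ℕ) (a b : ℝ) (σ : ℝ → ℝ)
    (ϑ : Fin (d * H + 2 * H + 1) → ℝ) : Set (Fin H) :=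
  {i | ∀ x ∈ cube d a b,
    σ (ϑ ⟨d * H + i.1, by have := i.2; omega⟩ +
      ∑ j : Fin d, ϑ ⟨i.1 * d + j.1, widx i j⟩ * x j) = 0}


noncomputable section ANNHelpers

open MeasureTheory

lemma congr2 {α β γ : Sort*} {g : α → β → γ} {a a' : α} {b b' : β}
    (h1 : a = a') (h2 : b = b') : g a b = g a' b' := by cases h1; cases h2; rfl

/-- Assemble a parameter vector from weights, biases, outer weights and outer bias. -/
def mkp (d H : ℕ) (w : Fin H → Fin d → ℝ) (bv vv : Fin H → ℝ) (c : ℝ) :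
    Fin (d * H + 2 * H + 1) → ℝ := fun k =>
  if h1 : k.1 < d * H then
    w ⟨k.1 / d, Nat.div_lt_of_lt_mul h1⟩
      ⟨k.1 % d, Nat.mod_lt _ (Nat.pos_of_ne_zero fun h => by subst h; simp at h1)⟩
  else if h2 : k.1 < d * H + H then bv ⟨k.1 - d * H, by omega⟩
  else if h3 : k.1 < d * H + 2 * H then vv ⟨k.1 - (d * H + H), by omega⟩
  else c

lemma mkp_w {d H : ℕ} (w : Fin H → Fin d → ℝ) (bv vv : Fin H → ℝ) (c : ℝ)
    (i : Fin H) (j : Fin d) (k : Fin (d * H + 2 * H + 1)) (hk : k.1 = i.1 * d + j.1) :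
    mkp d H w bv vv c k = w i j := by
  have hj := j.2
  have hd : 0 < d := by omega
  have h2 : (i.1 + 1) * d ≤ H * d := Nat.mul_le_mul_right d i.2
  have h3 : i.1 * d + j.1 < (i.1 + 1) * d := by rw [Nat.succ_mul]; omega
  have h1 : k.1 < d * H := by have hcomm : d * H = H * d := Nat.mul_comm d H; omega
  have hdiv : k.1 / d = i.1 := by
    rw [hk, mul_comm i.1 d, Nat.mul_add_div hd, Nat.div_eq_of_lt hj, add_zero]
  have hmod : k.1 % d = j.1 := by
    rw [hk, mul_comm i.1 d, Nat.mul_add_mod, Nat.mod_eq_of_lt hj]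
  unfold mkp
  rw [dif_pos h1]
  exact congr2 (Fin.ext hdiv) (Fin.ext hmod)

lemma mkp_b {d H : ℕ} (w : Fin H → Fin d → ℝ) (bv vv : Fin H → ℝ) (c : ℝ)
    (i : Fin H) (k : Fin (d * H + 2 * H + 1)) (hk : k.1 = d * H + i.1) :
    mkp d H w bv vv c k = bv i := by
  have hi := i.2
  unfold mkp
  rw [dif_neg (by omega), dif_pos (by omega)]
  exact congrArg bv (Fin.ext (show k.1 - d * H = i.1 by omega))

lemma mkp_v {d H : ℕ} (w : Fin H → Fin d → ℝ) (bv vv : Fin H → ℝ) (c : ℝ)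
    (i : Fin H) (k : Fin (d * H + 2 * H + 1)) (hk : k.1 = d * H + H + i.1) :
    mkp d H w bv vv c k = vv i := by
  have hi := i.2
  unfold mkp
  rw [dif_neg (by omega), dif_neg (by omega), dif_pos (by omega)]
  exact congrArg vv (Fin.ext (show k.1 - (d * H + H) = i.1 by omega))

lemma mkp_c {d H : ℕ} (w : Fin H → Fin d → ℝ) (bv vv : Fin H → ℝ) (c : ℝ)
    (k : Fin (d * H + 2 * H + 1)) (hk : k.1 = d * H + 2 * H) :
    mkp d H w bv vv c k = c := by
  unfold mkp
  rw [dif_neg (by omega), dif_neg (by omega), dif_neg (by omega)]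

lemma srel_mkp (d H : ℕ) (σ : ℝ → ℝ) (w : Fin H → Fin d → ℝ) (bv vv : Fin H → ℝ)
    (c : ℝ) (x : Fin d → ℝ) :
    srel d H σ (mkp d H w bv vv c) x
      = c + ∑ i : Fin H, vv i * σ (bv i + ∑ j : Fin d, w i j * x j) := by
  unfold srel
  rw [mkp_c w bv vv c _ rfl]
  congr 1
  refine Finset.sum_congr rfl fun i _ => ?_
  rw [mkp_v w bv vv c i _ rfl, mkp_b w bv vv c i _ rfl]
  congr 1
  congr 1
  congr 1
  refine Finset.sum_congr rfl fun j _ => ?_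
  rw [mkp_w w bv vv c i j _ rfl]

lemma cube_meas (d : ℕ) (a b : ℝ) : MeasurableSet (cube d a b) :=
  measurableSet_Icc

lemma srisk_nonneg (d H : ℕ) (a b : ℝ) (σ : ℝ → ℝ) (μ : Measure (Fin d → ℝ))
    (f : (Fin d → ℝ) → ℝ) (θ : Fin (d * H + 2 * H + 1) → ℝ) :
    0 ≤ srisk d H a b σ μ f θ :=
  integral_nonneg fun _ => sq_nonneg _

lemma sinf_le (d H : ℕ) (a b : ℝ) (σ : ℝ → ℝ) (μ : Measure (Fin d → ℝ))
    (f : (Fin d → ℝ) → ℝ) (θ : Fin (d * H + 2 * H + 1) → ℝ) :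
    sinf d H a b σ μ f ≤ srisk d H a b σ μ f θ :=
  ciInf_le ⟨0, by rintro r ⟨θ', rfl⟩; exact srisk_nonneg _ _ _ _ _ _ _ _⟩ θ

lemma srel_measurable (d H : ℕ) (σ : ℝ → ℝ) (hσm : Measurable σ)
    (θ : Fin (d * H + 2 * H + 1) → ℝ) : Measurable (srel d H σ θ) := by
  unfold srel
  refine measurable_const.add (Finset.measurable_sum _ fun i _ => ?_)
  exact (hσm.comp (measurable_const.add
    (Finset.measurable_sum _ fun j _ => (measurable_pi_apply j).const_mul _))).const_mul _

lemma abs_le_M {d : ℕ} {a b : ℝ} {x : Fin d → ℝ} (hx : x ∈ cube d a b) (j : Fin d) :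
    |x j| ≤ |a| + |b| := by
  have h1 := hx.1 j
  have h2 := hx.2 j
  simp only at h1 h2
  rw [abs_le]
  constructor
  · nlinarith [neg_abs_le a, abs_nonneg b]
  · nlinarith [le_abs_self b, abs_nonneg a]

lemma srel_bound (d H : ℕ) (a b : ℝ) (σ : ℝ → ℝ)
    (hσb : ∀ r : ℝ, ∃ C, ∀ y : ℝ, |y| ≤ r → |σ y| ≤ C)
    (θ : Fin (d * H + 2 * H + 1) → ℝ) :
    ∃ C, ∀ x ∈ cube d a b, |srel d H σ θ x| ≤ C := by
  set M : ℝ := |a| + |b| with hM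
  set r : Fin H → ℝ := fun i => |θ ⟨d * H + i.1, by have := i.2; omega⟩|
    + ∑ j : Fin d, |θ ⟨i.1 * d + j.1, widx i j⟩| * M with hr
  choose Cσ hCσ using fun i => hσb (r i)
  refine ⟨|θ ⟨d * H + 2 * H, by omega⟩| + ∑ i : Fin H,
    |θ ⟨d * H + H + i.1, by have := i.2; omega⟩| * Cσ i, fun x hx => ?_⟩
  unfold srel
  refine (abs_add_le _ _).trans (add_le_add le_rfl ?_)
  refine (Finset.abs_sum_le_sum_abs _ _).trans (Finset.sum_le_sum fun i _ => ?_)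
  rw [abs_mul]
  refine mul_le_mul_of_nonneg_left (hCσ i _ ?_) (abs_nonneg _)
  refine (abs_add_le _ _).trans (add_le_add le_rfl ?_)
  refine (Finset.abs_sum_le_sum_abs _ _).trans (Finset.sum_le_sum fun j _ => ?_)
  rw [abs_mul]
  exact mul_le_mul_of_nonneg_left (abs_le_M hx j) (abs_nonneg _)

lemma integrable_on_cube {d : ℕ} {a b : ℝ} {μ : Measure (Fin d → ℝ)} [IsFiniteMeasure μ]
    {g : (Fin d → ℝ) → ℝ} (hm : Measurable g) {C : ℝ}
    (hC : ∀ x ∈ cube d a b, |g x| ≤ C) :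
    Integrable g (μ.restrict (cube d a b)) := by
  refine Integrable.mono' (integrable_const C) hm.aestronglyMeasurable ?_
  rw [ae_restrict_iff' (cube_meas d a b)]
  exact ae_of_all _ fun x hx => by simpa [Real.norm_eq_abs] using hC x hx

end ANNHelpers
/-- If a global minimizer of the width-`W` risk exists with positive risk, then there is
`ε > 0` such that every width-`(W+1)` parameter vector with risk within `ε` of the
infimum risk has no inactive neurons. -/
theorem stmt12 (d : ℕ) (hd : 0 < d) (a b : ℝ) (hab : a ≤ b)
    (μ : Measure (Fin d → ℝ)) [IsFiniteMeasure μ]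
    (f : (Fin d → ℝ) → ℝ) (hf : Measurable f) (hfb : ∃ C, ∀ x, |f x| ≤ C)
    (σ : ℝ → ℝ) (hσm : Measurable σ)
    (hσb : ∀ r : ℝ, ∃ C, ∀ y : ℝ, |y| ≤ r → |σ y| ≤ C)
    (hdisc : Discriminatory d (cube d a b) μ σ)
    (W : ℕ) (θ : Fin (d * W + 2 * W + 1) → ℝ)
    (hθ : srisk d W a b σ μ f θ = sinf d W a b σ μ f)
    (hpos : 0 < sinf d W a b σ μ f) :
    ∃ ε > (0 : ℝ), ∀ ϑ : Fin (d * (W + 1) + 2 * (W + 1) + 1) → ℝ,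
      srisk d (W + 1) a b σ μ f ϑ < sinf d (W + 1) a b σ μ f + ε →
      inactive d (W + 1) a b σ ϑ = ∅ := by
  classical
  obtain ⟨Cf, hCf⟩ := hfb
  set mW := sinf d W a b σ μ f with hmW
  set φ : (Fin d → ℝ) → ℝ := fun x => srel d W σ θ x - f x with hφ
  have hφm : Measurable φ := (srel_measurable d W σ hσm θ).sub hf
  obtain ⟨Cs, hCs⟩ := srel_bound d W a b σ hσb θ
  have hφb : ∀ x ∈ cube d a b, |φ x| ≤ Cs + Cf := by
    intro x hx
    rw [hφ]
    exact (abs_sub _ _).trans (add_le_add (hCs x hx) (hCf x))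
  have hφint : Integrable φ (μ.restrict (cube d a b)) := integrable_on_cube hφm hφb
  -- Step B: strict improvement with one extra neuron
  have hcontr : ¬ ∀ (w : Fin d → ℝ) (c : ℝ),
      ∫ x in cube d a b, σ ((∑ j, w j * x j) + c) * φ x ∂μ = 0 := by
    intro h0
    have habs0 := hdisc φ hφm hφint h0
    have h1 : (fun x => |φ x|) =ᵐ[μ.restrict (cube d a b)] 0 :=
      (integral_eq_zero_iff_of_nonneg (fun x => abs_nonneg _) hφint.abs).mp habs0
    have h2 : (fun x => (srel d W σ θ x - f x) ^ 2)
        =ᵐ[μ.restrict (cube d a b)] 0 := by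
      refine h1.mono fun x hx => ?_
      simp only [Pi.zero_apply] at hx ⊢
      have hx0 : φ x = 0 := abs_eq_zero.mp hx
      rw [hφ] at hx0
      simp only at hx0
      rw [hx0]
      ring
    have h3 : srisk d W a b σ μ f θ = 0 := by
      unfold srisk
      rw [integral_congr_ae h2]
      simp
    rw [hθ] at h3
    linarith
  push_neg at hcontr
  obtain ⟨w, c, hI⟩ := hcontr
  have hgm : Measurable (fun x : Fin d → ℝ => σ ((∑ j, w j * x j) + c)) :=
    hσm.comp ((Finset.measurable_sum _ fun j _ =>
      (measurable_pi_apply j).const_mul _).add_const c)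
  obtain ⟨Cg, hCg0⟩ := hσb (∑ j : Fin d, |w j| * (|a| + |b|) + |c|)
  have hgb : ∀ x ∈ cube d a b, |σ ((∑ j, w j * x j) + c)| ≤ Cg := by
    intro x hx
    refine hCg0 _ ?_
    refine (abs_add_le _ _).trans (add_le_add ?_ le_rfl)
    refine (Finset.abs_sum_le_sum_abs _ _).trans (Finset.sum_le_sum fun j _ => ?_)
    rw [abs_mul]
    exact mul_le_mul_of_nonneg_left (abs_le_M hx j) (abs_nonneg _)
  have hane : ((fun _ => a) : Fin d → ℝ) ∈ cube d a b :=
    Set.mem_Icc.mpr ⟨le_rfl, fun j => hab⟩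
  have hCsf0 : 0 ≤ Cs + Cf := le_trans (abs_nonneg _) (hφb _ hane)
  have hCg1 : 0 ≤ Cg := le_trans (abs_nonneg _) (hgb _ hane)
  have hφ2int : Integrable (fun x => φ x ^ 2) (μ.restrict (cube d a b)) :=
    integrable_on_cube (hφm.pow_const 2) (C := (Cs + Cf) ^ 2) fun x hx => by
      rw [abs_pow]; exact pow_le_pow_left₀ (abs_nonneg _) (hφb x hx) 2
  have hgφint : Integrable (fun x => σ ((∑ j, w j * x j) + c) * φ x)
      (μ.restrict (cube d a b)) :=
    integrable_on_cube (hgm.mul hφm) (C := Cg * (Cs + Cf)) fun x hx => by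
      rw [abs_mul]; exact mul_le_mul (hgb x hx) (hφb x hx) (abs_nonneg _) hCg1
  have hg2int : Integrable (fun x => σ ((∑ j, w j * x j) + c) ^ 2)
      (μ.restrict (cube d a b)) :=
    integrable_on_cube (hgm.pow_const 2) (C := Cg ^ 2) fun x hx => by
      rw [abs_pow]; exact pow_le_pow_left₀ (abs_nonneg _) (hgb x hx) 2
  set I := ∫ x in cube d a b, σ ((∑ j, w j * x j) + c) * φ x ∂μ with hIdef
  set J := ∫ x in cube d a b, σ ((∑ j, w j * x j) + c) ^ 2 ∂μ with hJdef
  have hJ0 : 0 ≤ J := integral_nonneg fun x => sq_nonneg _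
  have hJ1 : (0 : ℝ) < J + 1 := by linarith
  set t : ℝ := -I / (J + 1) with htdef
  have htne : t ≠ 0 := div_ne_zero (neg_ne_zero.mpr hI) (ne_of_gt hJ1)
  set ϑt := mkp d (W + 1)
      (Fin.snoc (fun i j => θ ⟨i.1 * d + j.1, widx i j⟩) w)
      (Fin.snoc (fun i => θ ⟨d * W + i.1, by have := i.2; omega⟩) c)
      (Fin.snoc (fun i => θ ⟨d * W + W + i.1, by have := i.2; omega⟩) t)
      (θ ⟨d * W + 2 * W, by omega⟩) with hϑt
  have hrel : ∀ x, srel d (W + 1) σ ϑt x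
      = srel d W σ θ x + t * σ ((∑ j, w j * x j) + c) := by
    intro x
    rw [hϑt, srel_mkp, Fin.sum_univ_castSucc]
    simp only [Fin.snoc_castSucc, Fin.snoc_last]
    rw [add_comm c (∑ j : Fin d, w j * x j)]
    unfold srel
    exact (add_assoc _ _ _).symm
  have hexp : srisk d (W + 1) a b σ μ f ϑt = mW + (2 * t * I + t ^ 2 * J) := by
    have hint : (fun x => (srel d (W + 1) σ ϑt x - f x) ^ 2)
        = fun x => φ x ^ 2 + ((2 * t) * (σ ((∑ j, w j * x j) + c) * φ x)
            + t ^ 2 * (σ ((∑ j, w j * x j) + c) ^ 2)) := by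
      funext x
      rw [hrel x, hφ]
      ring
    unfold srisk
    have hsum : Integrable (fun x => (2 * t) * (σ ((∑ j, w j * x j) + c) * φ x)
        + t ^ 2 * (σ ((∑ j, w j * x j) + c) ^ 2)) (μ.restrict (cube d a b)) :=
      (hgφint.const_mul (2 * t)).add (hg2int.const_mul (t ^ 2))
    rw [hint, integral_add hφ2int hsum,
      integral_add (hgφint.const_mul (2 * t)) (hg2int.const_mul (t ^ 2)),
      integral_const_mul, integral_const_mul]
    have hφ2 : ∫ x in cube d a b, φ x ^ 2 ∂μ = mW := by
      rw [← hθ]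
      unfold srisk
      rfl
    rw [hφ2, ← hIdef, ← hJdef]
  have hI' : I = -(t * (J + 1)) := by
    rw [htdef]
    field_simp
  have ht2 : 0 < t ^ 2 := by
    rcases lt_or_gt_of_ne htne with h | h
    · nlinarith
    · nlinarith
  have hneg : 2 * t * I + t ^ 2 * J < 0 := by
    have : 2 * t * I + t ^ 2 * J = -(t ^ 2 * (J + 2)) := by rw [hI']; ring
    rw [this]
    nlinarith
  have himp : sinf d (W + 1) a b σ μ f < mW :=
    lt_of_le_of_lt (sinf_le d (W + 1) a b σ μ f ϑt) (by rw [hexp]; linarith)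
  -- Step A: deleting an inactive neuron
  have hdel : ∀ ϑ : Fin (d * (W + 1) + 2 * (W + 1) + 1) → ℝ,
      (inactive d (W + 1) a b σ ϑ).Nonempty →
      mW ≤ srisk d (W + 1) a b σ μ f ϑ := by
    rintro ϑ ⟨i, hi⟩
    set θ' := mkp d W
      (fun k j => ϑ ⟨(i.succAbove k).1 * d + j.1, widx (i.succAbove k) j⟩)
      (fun k => ϑ ⟨d * (W + 1) + (i.succAbove k).1,
        by have := (i.succAbove k).2; omega⟩)
      (fun k => ϑ ⟨d * (W + 1) + (W + 1) + (i.succAbove k).1,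
        by have := (i.succAbove k).2; omega⟩)
      (ϑ ⟨d * (W + 1) + 2 * (W + 1), by omega⟩) with hθ'
    have hpt : ∀ x ∈ cube d a b, srel d W σ θ' x = srel d (W + 1) σ ϑ x := by
      intro x hx
      rw [hθ', srel_mkp]
      unfold srel
      rw [Fin.sum_univ_succAbove _ i]
      rw [hi x hx, mul_zero, zero_add]
    have hre : srisk d (W + 1) a b σ μ f ϑ = srisk d W a b σ μ f θ' := by
      unfold srisk
      exact (setIntegral_congr_fun (cube_meas d a b) fun x hx => by rw [hpt x hx]).symm
    rw [hre]
    exact sinf_le d W a b σ μ f θ'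
  refine ⟨mW - sinf d (W + 1) a b σ μ f, by linarith, fun ϑ hϑ => ?_⟩
  by_contra hne
  have hnon : (inactive d (W + 1) a b σ ϑ).Nonempty := Set.nonempty_iff_ne_empty.mpr hne
  have := hdel ϑ hnon
  linarith
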